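/- Let H ∈ F₂^{m×n} have rank m over F₂ and be (δ,γ)-expanding, let 0 < ε < δγ/2 and 0 < ξ < (δ − 2ε/γ)/2. Then for every ξ-cluster C of Ω(ε), the ratio of the total number of low-energy states to the cluster size satisfies |Ω(ε)| / |C| ≥ 2^{n−m} · (Σ_{0 ≤ i < εn} binom(m,i)) / (Σ_{i=0}^{⌊2εn/γ⌋} binom(n,i)). In particular the configurational min-entropy of the cluster decomposition, (1/n)·log₂(|Ω(ε)|/max_j |C_j|), is bounded below by (1/n)·log₂ of this ratio. -/

import Mathlib

open scoped Classical

section Aux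

lemma aux_neg_eq_self {k : ℕ} (a : Fin k → ZMod 2) : -a = a := by
  funext j; rw [Pi.neg_apply]; generalize a j = b; revert b; decide

lemma aux_add_self {k : ℕ} (a : Fin k → ZMod 2) : a + a = 0 := by
  funext j; rw [Pi.add_apply, Pi.zero_apply]; generalize a j = b; revert b; decide

lemma aux_hnorm_add_le {k : ℕ} (a b : Fin k → ZMod 2) :
    hammingNorm (a + b) ≤ hammingNorm a + hammingNorm b := by
  have : a + b = a - b := by rw [sub_eq_add_neg, aux_neg_eq_self]
  rw [show a + b = -a + b by rw [aux_neg_eq_self], ← hammingDist_eq_hammingNorm]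
  calc hammingDist a b ≤ hammingDist a 0 + hammingDist 0 b := hammingDist_triangle _ _ _
    _ = hammingNorm a + hammingNorm b := by
        rw [hammingDist_zero_right, hammingDist_zero_left]

lemma aux_weight_count (k i : ℕ) :
    (Finset.univ.filter (fun y : Fin k → ZMod 2 => hammingNorm y = i)).card = k.choose i := by
  have hk : k.choose i = (Finset.powersetCard i (Finset.univ : Finset (Fin k))).card := by
    rw [Finset.card_powersetCard]; simp
  rw [hk]
  apply Finset.card_bij (fun y _ => Finset.univ.filter (fun j => y j ≠ 0))
  · intro y hy
    simp only [Finset.mem_filter, Finset.mem_univ, true_and] at hy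
    simp [Finset.mem_powersetCard, ← hy, hammingNorm]
  · intro y1 h1 y2 h2 h
    funext j
    have hj := Finset.ext_iff.mp h j
    simp only [Finset.mem_filter, Finset.mem_univ, true_and] at hj
    revert hj
    generalize y1 j = a; generalize y2 j = b
    revert a b; decide
  · intro A hA
    refine ⟨fun j => if j ∈ A then 1 else 0, ?_, ?_⟩
    · simp only [Finset.mem_filter, Finset.mem_univ, true_and]
      simp only [Finset.mem_powersetCard] at hA
      rw [hammingNorm, ← hA.2]
      congr 1
      ext j
      by_cases h : j ∈ A <;> simp [h]
    · ext j
      by_cases h : j ∈ A <;> simp [h]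

lemma aux_ball_count (k R : ℕ) :
    (Finset.univ.filter (fun y : Fin k → ZMod 2 => hammingNorm y ≤ R)).card
      = ∑ i ∈ Finset.range (R + 1), k.choose i := by
  rw [Finset.card_eq_sum_card_fiberwise (f := fun y => hammingNorm y)
      (t := Finset.range (R + 1)) (fun y hy => by
        simp only [Finset.mem_coe, Finset.mem_filter] at hy
        exact Finset.mem_range.mpr (Nat.lt_succ_of_le hy.2))]
  apply Finset.sum_congr rfl
  intro i hi
  rw [Finset.filter_filter, ← aux_weight_count k i]
  congr 1
  apply Finset.filter_congr
  intro y _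
  constructor
  · exact fun h => h.2
  · exact fun h => ⟨h ▸ Nat.lt_succ_iff.mp (Finset.mem_range.mp hi), h⟩

lemma aux_scount (k : ℕ) (c : ℝ) :
    (Finset.univ.filter (fun s : Fin k → ZMod 2 => (hammingNorm s : ℝ) < c)).card
      = ∑ i ∈ (Finset.range (k + 1)).filter (fun i : ℕ => (i : ℝ) < c), k.choose i := by
  rw [Finset.card_eq_sum_card_fiberwise (f := fun y => hammingNorm y)
      (t := (Finset.range (k + 1)).filter (fun i : ℕ => (i : ℝ) < c)) (fun y hy => by
        simp only [Finset.mem_coe, Finset.mem_filter] at hy ⊢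
        refine ⟨Finset.mem_range.mpr (Nat.lt_succ_of_le ?_), hy.2⟩
        exact le_trans hammingNorm_le_card_fintype (le_of_eq (Fintype.card_fin k)))]
  apply Finset.sum_congr rfl
  intro i hi
  rw [Finset.filter_filter, ← aux_weight_count k i]
  congr 1
  apply Finset.filter_congr
  intro y _
  simp only [Finset.mem_filter] at hi
  constructor
  · exact fun h => h.2
  · exact fun h => ⟨h ▸ hi.2, h⟩

lemma aux_card_filter_add {k : ℕ} (x : Fin k → ZMod 2) (P : (Fin k → ZMod 2) → Prop) :
    (Finset.univ.filter (fun y => P (y + x))).card = (Finset.univ.filter P).card := by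
  apply Finset.card_bij (fun y _ => y + x)
  · intro y hy
    simp only [Finset.mem_filter, Finset.mem_univ, true_and] at hy ⊢
    exact hy
  · intro a _ b _ h
    exact add_right_cancel h
  · intro z hz
    simp only [Finset.mem_filter, Finset.mem_univ, true_and] at hz
    exact ⟨z + x, by simp only [Finset.mem_filter, Finset.mem_univ, true_and,
      add_assoc, aux_add_self, add_zero]; exact hz, by rw [add_assoc, aux_add_self, add_zero]⟩

lemma aux_omega_card {m n : ℕ} (H : Matrix (Fin m) (Fin n) (ZMod 2))
    (hrank : H.rank = m) (c : ℝ) :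
    (Finset.univ.filter (fun y : Fin n → ZMod 2 => (hammingNorm (H.mulVec y) : ℝ) < c)).card
      = 2 ^ (n - m) *
        (Finset.univ.filter (fun s : Fin m → ZMod 2 => (hammingNorm s : ℝ) < c)).card := by
  have hsurj : ∀ b : Fin m → ZMod 2, ∃ y, H.mulVec y = b := by
    have htop : LinearMap.range H.mulVecLin = ⊤ := by
      apply Submodule.eq_top_of_finrank_eq
      rw [← Matrix.rank, hrank, Module.finrank_fintype_fun_eq_card, Fintype.card_fin]
    intro b
    obtain ⟨y, hy⟩ := (LinearMap.range_eq_top.mp htop) b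
    exact ⟨y, by rw [← Matrix.mulVecLin_apply]; exact hy⟩
  have hker : (Finset.univ.filter (fun z : Fin n → ZMod 2 => H.mulVec z = 0)).card
      = 2 ^ (n - m) := by
    have h1 : (Finset.univ.filter (fun z : Fin n → ZMod 2 => H.mulVec z = 0)).card
        = Fintype.card (LinearMap.ker H.mulVecLin) := by
      rw [Fintype.card_subtype]
      congr 1
      apply Finset.filter_congr
      intro z _
      simp [LinearMap.mem_ker, Matrix.mulVecLin_apply]
    rw [h1, Module.card_eq_pow_finrank (K := ZMod 2), ZMod.card]
    congr 1
    have hrn := LinearMap.finrank_range_add_finrank_ker (H.mulVecLin)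
    rw [Module.finrank_fintype_fun_eq_card, Fintype.card_fin] at hrn
    have : Module.finrank (ZMod 2) (LinearMap.range H.mulVecLin) = m := by
      rw [← Matrix.rank, hrank]
    omega
  have hfiber : ∀ b ∈ Finset.univ.filter (fun s : Fin m → ZMod 2 => (hammingNorm s : ℝ) < c),
      ((Finset.univ.filter (fun y : Fin n → ZMod 2 =>
        (hammingNorm (H.mulVec y) : ℝ) < c)).filter (fun y => H.mulVec y = b)).card
        = 2 ^ (n - m) := by
    intro b hb
    simp only [Finset.mem_filter, Finset.mem_univ, true_and] at hb
    obtain ⟨y₀, hy₀⟩ := hsurj b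
    have heq : (Finset.univ.filter (fun y : Fin n → ZMod 2 =>
        (hammingNorm (H.mulVec y) : ℝ) < c)).filter (fun y => H.mulVec y = b)
        = Finset.univ.filter (fun y => H.mulVec y = b) := by
      rw [Finset.filter_filter]
      apply Finset.filter_congr
      intro y _
      constructor
      · exact fun h => h.2
      · exact fun h => ⟨h ▸ hb, h⟩
    rw [heq, ← hker]
    apply Finset.card_bij (fun y _ => y + y₀)
    · intro y hy
      simp only [Finset.mem_filter, Finset.mem_univ, true_and] at hy ⊢
      rw [Matrix.mulVec_add, hy, hy₀, aux_add_self]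
    · intro a _ b' _ h
      exact add_right_cancel h
    · intro z hz
      simp only [Finset.mem_filter, Finset.mem_univ, true_and] at hz
      refine ⟨z + y₀, ?_, by rw [add_assoc, aux_add_self, add_zero]⟩
      simp only [Finset.mem_filter, Finset.mem_univ, true_and, Matrix.mulVec_add, hy₀]
      rw [hz, zero_add]
  rw [Finset.card_eq_sum_card_fiberwise (f := fun y => H.mulVec y)
      (t := Finset.univ.filter (fun s : Fin m → ZMod 2 => (hammingNorm s : ℝ) < c))
      (fun y hy => by
        simp only [Finset.mem_coe, Finset.mem_filter, Finset.mem_univ, true_and] at hy ⊢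
        exact hy),
    Finset.sum_congr rfl hfiber, Finset.sum_const, smul_eq_mul, mul_comm]

end Aux

/-- A binary matrix `H ∈ F₂^{m×n}` is `(δ,γ)`-expanding if every `x ∈ F₂ⁿ`
with Hamming weight `|x| ≤ δn` satisfies `|Hx| ≥ γ|x|`. -/
def IsExpanding {m n : ℕ} (H : Matrix (Fin m) (Fin n) (ZMod 2)) (δ γ : ℝ) : Prop :=
  ∀ x : Fin n → ZMod 2, (hammingNorm x : ℝ) ≤ δ * n →
    γ * (hammingNorm x : ℝ) ≤ (hammingNorm (H.mulVec x) : ℝ)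

/-- `x ∼ y` on `Ω(ε) = {z : |Hz| < εn}`: there is a path `v₀ = x, …, v_ℓ = y`
inside `Ω(ε)` whose consecutive members differ in fewer than `ξn` coordinates.
Its equivalence classes are the ξ-clusters of `Ω(ε)`. -/
def Connected {m n : ℕ} (H : Matrix (Fin m) (Fin n) (ZMod 2)) (ε ξ : ℝ)
    (x y : Fin n → ZMod 2) : Prop :=
  ∃ (ℓ : ℕ) (v : ℕ → Fin n → ZMod 2), v 0 = x ∧ v ℓ = y ∧
    (∀ i ≤ ℓ, (hammingNorm (H.mulVec (v i)) : ℝ) < ε * n) ∧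
    (∀ i < ℓ, (hammingNorm (v i + v (i + 1)) : ℝ) < ξ * n)

lemma aux_cluster_ball {m n : ℕ} (H : Matrix (Fin m) (Fin n) (ZMod 2))
    (δ γ ε ξ : ℝ) (hγ : 0 < γ) (hexp : IsExpanding H δ γ)
    (hε : ε < δ * γ / 2)
    (hξ : ξ < (δ - 2 * ε / γ) / 2)
    (x y : Fin n → ZMod 2) (hx : (hammingNorm (H.mulVec x) : ℝ) < ε * n)
    (hconn : Connected H ε ξ x y) :
    γ * (hammingNorm (y + x) : ℝ) < 2 * (ε * n) := by
  obtain ⟨ℓ, v, hv0, hvℓ, hΩ, hstep⟩ := hconn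
  have hεn : (0:ℝ) < ε * n := lt_of_le_of_lt (Nat.cast_nonneg _) hx
  have hn0 : (0:ℝ) ≤ (n:ℝ) := Nat.cast_nonneg _
  have hgap : 2 * ε / γ + ξ < δ := by
    have h1 : 2 * ε / γ < δ := by
      rw [div_lt_iff₀ hγ]
      nlinarith
    nlinarith
  have key : ∀ i, i ≤ ℓ → γ * (hammingNorm (v i + x) : ℝ) < 2 * (ε * n) := by
    intro i
    induction i with
    | zero =>
      intro _
      rw [hv0, aux_add_self, hammingNorm_zero]
      simpa using by nlinarith
    | succ i ih =>
      intro hi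
      have hiℓ : i < ℓ := hi
      have ihh := ih (le_of_lt hiℓ)
      have hWi : (hammingNorm (v i + x) : ℝ) < 2 * (ε * n) / γ := by
        rw [lt_div_iff₀ hγ]; nlinarith
      have heq : (v i + x) + (v i + v (i + 1)) = v (i + 1) + x := by
        rw [show (v i + x) + (v i + v (i + 1)) = (v i + v i) + (x + v (i + 1)) by ring,
          aux_add_self, zero_add, add_comm]
      have htri : (hammingNorm (v (i + 1) + x) : ℝ)
          ≤ (hammingNorm (v i + x) : ℝ) + (hammingNorm (v i + v (i + 1)) : ℝ) := by
        rw [← heq]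
        exact_mod_cast aux_hnorm_add_le _ _
      have hstepi := hstep i hiℓ
      have hsmall : (hammingNorm (v (i + 1) + x) : ℝ) ≤ δ * n := by
        have h3 : (hammingNorm (v (i + 1) + x) : ℝ) < 2 * (ε * n) / γ + ξ * n := by linarith
        have h2 : 2 * (ε * n) / γ + ξ * n ≤ δ * n := by
          have h4 : 2 * (ε * n) / γ = (2 * ε / γ) * n := by ring
          rw [h4]
          nlinarith
        linarith
      have hexpand := hexp _ hsmall
      have hHsum : (hammingNorm (H.mulVec (v (i + 1) + x)) : ℝ) < 2 * (ε * n) := by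
        rw [Matrix.mulVec_add]
        have h1 := hΩ (i + 1) hi
        have h5 := aux_hnorm_add_le (H.mulVec (v (i + 1))) (H.mulVec x)
        have hc : (hammingNorm (H.mulVec (v (i + 1)) + H.mulVec x) : ℝ)
            ≤ (hammingNorm (H.mulVec (v (i + 1))) : ℝ) + (hammingNorm (H.mulVec x) : ℝ) := by
          exact_mod_cast h5
        linarith
      linarith
  have hfin := key ℓ le_rfl
  rwa [hvℓ] at hfin

/-- for `H` of full rank `m` that is `(δ,γ)`-expanding, with
`0 < ε < δγ/2` and `0 < ξ < (δ − 2ε/γ)/2`, the ratio `|Ω(ε)|/|C|` for any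
ξ-cluster `C` of `Ω(ε)` is at least
`2^{n−m} · (Σ_{0 ≤ i < εn} C(m,i)) / (Σ_{i=0}^{⌊2εn/γ⌋} C(n,i))`; this lower
bounds the configurational min-entropy of the cluster decomposition. -/
theorem cluster_min_entropy_bound {m n : ℕ} (H : Matrix (Fin m) (Fin n) (ZMod 2))
    (hrank : H.rank = m)
    (δ γ ε ξ : ℝ) (hδ : 0 < δ) (hγ : 0 < γ) (hexp : IsExpanding H δ γ)
    (hε0 : 0 < ε) (hε : ε < δ * γ / 2)
    (hξ0 : 0 < ξ) (hξ : ξ < (δ - 2 * ε / γ) / 2)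
    (x : Fin n → ZMod 2) (hx : (hammingNorm (H.mulVec x) : ℝ) < ε * n) :
    (2 : ℝ) ^ (n - m) *
        (∑ i ∈ (Finset.range (m + 1)).filter (fun i : ℕ => (i : ℝ) < ε * n),
          (Nat.choose m i : ℝ)) /
        (∑ i ∈ Finset.range (⌊2 * ε * (n : ℝ) / γ⌋₊ + 1), (Nat.choose n i : ℝ))
      ≤ ((Finset.univ.filter
            (fun y : Fin n → ZMod 2 => (hammingNorm (H.mulVec y) : ℝ) < ε * n)).card : ℝ) /
          ((Finset.univ.filter (fun y : Fin n → ZMod 2 => Connected H ε ξ x y)).card : ℝ) := by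
  set R : ℕ := ⌊2 * ε * (n : ℝ) / γ⌋₊ with hR
  set Ω := Finset.univ.filter
    (fun y : Fin n → ZMod 2 => (hammingNorm (H.mulVec y) : ℝ) < ε * n) with hΩdef
  set C := Finset.univ.filter (fun y : Fin n → ZMod 2 => Connected H ε ξ x y) with hCdef
  -- |Ω| = 2^(n-m) * A
  have hΩcard : (Ω.card : ℝ) = (2 : ℝ) ^ (n - m) *
      (∑ i ∈ (Finset.range (m + 1)).filter (fun i : ℕ => (i : ℝ) < ε * n),
        (Nat.choose m i : ℝ)) := by
    rw [hΩdef, aux_omega_card H hrank (ε * n), aux_scount m (ε * n)]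
    push_cast
    ring
  -- |C| ≤ B
  have hCsub : C ⊆ Finset.univ.filter
      (fun y : Fin n → ZMod 2 => hammingNorm (y + x) ≤ R) := by
    intro y hy
    simp only [hCdef, Finset.mem_filter, Finset.mem_univ, true_and] at hy ⊢
    have hb := aux_cluster_ball H δ γ ε ξ hγ hexp hε hξ x y hx hy
    have : (hammingNorm (y + x) : ℝ) ≤ 2 * ε * (n : ℝ) / γ := by
      rw [le_div_iff₀ hγ]
      nlinarith
    exact Nat.le_floor this
  have hCle : (C.card : ℝ) ≤ ∑ i ∈ Finset.range (R + 1), (Nat.choose n i : ℝ) := by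
    have h1 : C.card ≤ (Finset.univ.filter
        (fun y : Fin n → ZMod 2 => hammingNorm (y + x) ≤ R)).card :=
      Finset.card_le_card hCsub
    have h2 : (Finset.univ.filter
        (fun y : Fin n → ZMod 2 => hammingNorm (y + x) ≤ R)).card
        = ∑ i ∈ Finset.range (R + 1), Nat.choose n i := by
      rw [← aux_ball_count n R]
      apply Finset.card_bij (fun y _ => y + x)
      · intro y hy
        simp only [Finset.mem_filter, Finset.mem_univ, true_and] at hy ⊢
        exact hy
      · intro a _ b _ h
        exact add_right_cancel h
      · intro z hz
        simp only [Finset.mem_filter, Finset.mem_univ, true_and] at hz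
        exact ⟨z + x, by
          simp only [Finset.mem_filter, Finset.mem_univ, true_and, add_assoc,
            aux_add_self, add_zero]
          exact hz, by rw [add_assoc, aux_add_self, add_zero]⟩
    calc (C.card : ℝ) ≤ ((∑ i ∈ Finset.range (R + 1), Nat.choose n i : ℕ) : ℝ) := by
          exact_mod_cast h2 ▸ h1
      _ = ∑ i ∈ Finset.range (R + 1), (Nat.choose n i : ℝ) := by push_cast; ring
  -- C is nonempty
  have hCpos : (0 : ℝ) < (C.card : ℝ) := by
    have hxC : x ∈ C := by
      simp only [hCdef, Finset.mem_filter, Finset.mem_univ, true_and]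
      exact ⟨0, fun _ => x, rfl, rfl, fun i hi => by simpa using hx, fun i hi => absurd hi (by omega)⟩
    exact_mod_cast Finset.card_pos.mpr ⟨x, hxC⟩
  have hBpos : (0 : ℝ) < ∑ i ∈ Finset.range (R + 1), (Nat.choose n i : ℝ) := by
    apply Finset.sum_pos' (fun i _ => by positivity)
    exact ⟨0, Finset.mem_range.mpr (Nat.succ_pos R), by simp⟩
  rw [hΩcard]
  apply div_le_div_of_nonneg_left _ hCpos hCle
  positivity
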